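/- (Higman-type encoding) Fix the four generators a, b, c, d of FreeGroup (Fin 4). For a subset E ⊆ ℕ, let R_E = { a^{-e} * b * a^{e} * (c^{-e} * d * c^{e})⁻¹ : e ∈ E } ⊆ FreeGroup (Fin 4), and let G_E = PresentedGroup R_E. Then for every m : ℕ, the image of a^{-m} * b * a^{m} * (c^{-m} * d * c^{m})⁻¹ in G_E equals 1 if and only if m ∈ E. -/

import Mathlib

namespace HigmanEncoding

/-- The first generator `a` of `FreeGroup (Fin 4)`. -/
def a : FreeGroup (Fin 4) := FreeGroup.of 0
/-- The second generator `b` of `FreeGroup (Fin 4)`. -/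
def b : FreeGroup (Fin 4) := FreeGroup.of 1
/-- The third generator `c` of `FreeGroup (Fin 4)`. -/
def c : FreeGroup (Fin 4) := FreeGroup.of 2
/-- The fourth generator `d` of `FreeGroup (Fin 4)`. -/
def d : FreeGroup (Fin 4) := FreeGroup.of 3

/-- The relator `a^{-e} b a^{e} (c^{-e} d c^{e})⁻¹`. -/
def rel (e : ℕ) : FreeGroup (Fin 4) :=
  a ^ (-(e : ℤ)) * b * a ^ (e : ℤ) * (c ^ (-(e : ℤ)) * d * c ^ (e : ℤ))⁻¹

/-- The relator set `R_E = { a^{-e} b a^{e} (c^{-e} d c^{e})⁻¹ : e ∈ E }`. -/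
def RE (E : Set ℕ) : Set (FreeGroup (Fin 4)) := {x | ∃ e ∈ E, x = rel e}

end HigmanEncoding

namespace HigmanEncoding

/-! Auxiliary construction: a homomorphism killing `rel e` iff `e ≠ n`. -/

/-- Indicator of the nonnegative integers. -/
def chi : ℤ → ZMod 2 := fun x => if 0 ≤ x then 1 else 0

/-- Swap of `-n` and `-n-1`. -/
def tau (n : ℕ) : Equiv.Perm ℤ := Equiv.swap (-(n:ℤ)) (-(n:ℤ)-1)

/-- Shift. -/
def sh : Equiv.Perm ℤ := Equiv.addRight 1

/-- Precomposition action of permutations of `ℤ` on `ℤ → ZMod 2`. -/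
def permCompHom : Equiv.Perm ℤ →* Equiv.Perm (ℤ → ZMod 2) where
  toFun π := ⟨fun f => f ∘ π.symm, fun f => f ∘ π, fun f => by ext x; simp, fun f => by ext x; simp⟩
  map_one' := by ext f x; simp; rfl
  map_mul' π ρ := by
    ext f x
    simp only [Equiv.coe_fn_mk, Equiv.Perm.coe_mul, Function.comp_apply, ← Equiv.Perm.inv_def,
      mul_inv_rev, Equiv.Perm.mul_apply]

/-- Addition by a fixed function. -/
def addPerm (v : ℤ → ZMod 2) : Equiv.Perm (ℤ → ZMod 2) := Equiv.addRight v

lemma addPerm_apply (v f : ℤ → ZMod 2) : addPerm v f = f + v := rfl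

lemma conj_addPerm (π : Equiv.Perm ℤ) (v : ℤ → ZMod 2) :
    (permCompHom π)⁻¹ * addPerm v * permCompHom π = addPerm (v ∘ π) := by
  rw [← map_inv]
  ext f x
  simp [permCompHom, addPerm, Equiv.Perm.mul_apply, ← Equiv.Perm.inv_def]
  exact congrArg f (Equiv.symm_apply_apply π x)

lemma addPerm_mul_inv (u v : ℤ → ZMod 2) :
    addPerm u * (addPerm v)⁻¹ = addPerm (u - v) := by
  ext f x
  simp [addPerm, Equiv.Perm.mul_apply, sub_eq_add_neg]
  ring

def gens (n : ℕ) : Fin 4 → Equiv.Perm (ℤ → ZMod 2) :=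
  ![permCompHom sh, addPerm chi, permCompHom (tau n * sh * (tau n)⁻¹), addPerm (chi ∘ tau n)]

def phi (n : ℕ) : FreeGroup (Fin 4) →* Equiv.Perm (ℤ → ZMod 2) := FreeGroup.lift (gens n)

lemma sh_zpow (k x : ℤ) : (sh ^ k) x = x + k := by
  simp [sh]

lemma phi_rel (n e : ℕ) :
    phi n (rel e) =
      addPerm ((chi ∘ ⇑(sh ^ (e:ℤ))) - (chi ∘ ⇑(tau n)) ∘ ⇑(tau n * sh ^ (e:ℤ) * (tau n)⁻¹)) := by
  have ha : phi n a = permCompHom sh := FreeGroup.lift_apply_of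
  have hb : phi n b = addPerm chi := FreeGroup.lift_apply_of
  have hc : phi n c = permCompHom (tau n * sh * (tau n)⁻¹) := FreeGroup.lift_apply_of
  have hd : phi n d = addPerm (chi ∘ tau n) := FreeGroup.lift_apply_of
  have h1 : phi n (a ^ (-(e:ℤ)) * b * a ^ (e:ℤ)) = addPerm (chi ∘ ⇑(sh ^ (e:ℤ))) := by
    rw [map_mul, map_mul, map_zpow, map_zpow, ha, hb, zpow_neg, ← map_zpow]
    exact conj_addPerm _ _
  have h2 : phi n (c ^ (-(e:ℤ)) * d * c ^ (e:ℤ)) =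
      addPerm ((chi ∘ ⇑(tau n)) ∘ ⇑(tau n * sh ^ (e:ℤ) * (tau n)⁻¹)) := by
    rw [map_mul, map_mul, map_zpow, map_zpow, hc, hd, zpow_neg, ← map_zpow, conj_zpow]
    exact conj_addPerm _ _
  have heq : rel e = (a ^ (-(e:ℤ)) * b * a ^ (e:ℤ)) * (c ^ (-(e:ℤ)) * d * c ^ (e:ℤ))⁻¹ := rfl
  rw [heq, map_mul, map_inv, h1, h2, addPerm_mul_inv]

lemma chi_eval (e : ℕ) (x : ℤ) : chi (x + e) = if -(e:ℤ) ≤ x then 1 else 0 := by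
  unfold chi
  congr 1
  simp only [eq_iff_iff]
  omega

lemma tau_sq_apply (n : ℕ) (x : ℤ) : tau n (tau n x) = x := Equiv.swap_apply_self _ _ _

lemma phi_rel_apply (n e : ℕ) (x : ℤ) :
    ((chi ∘ ⇑(sh ^ (e:ℤ))) - (chi ∘ ⇑(tau n)) ∘ ⇑(tau n * sh ^ (e:ℤ) * (tau n)⁻¹)) x
      = chi (x + e) - chi (tau n x + e) := by
  simp only [Pi.sub_apply, Function.comp_apply, Equiv.Perm.mul_apply]
  rw [show (tau n)⁻¹ = tau n from by rw [tau]; exact Equiv.swap_inv _ _]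
  rw [tau_sq_apply, sh_zpow, sh_zpow]

lemma phi_rel_eq_one (n e : ℕ) (h : e ≠ n) : phi n (rel e) = 1 := by
  rw [phi_rel]
  have : ((chi ∘ ⇑(sh ^ (e:ℤ))) - (chi ∘ ⇑(tau n)) ∘ ⇑(tau n * sh ^ (e:ℤ) * (tau n)⁻¹)) = 0 := by
    funext x
    rw [phi_rel_apply, Pi.zero_apply]
    rcases eq_or_ne x (-(n:ℤ)) with hx | hx
    · subst hx
      have h1 : tau n (-(n:ℤ)) = -(n:ℤ) - 1 := Equiv.swap_apply_left _ _
      rw [h1, chi_eval, chi_eval]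
      rcases lt_or_gt_of_ne (fun hh => h (by exact_mod_cast hh) : (e:ℤ) ≠ (n:ℤ)) with hlt | hgt
      · rw [if_neg (by omega), if_neg (by omega)]; ring
      · rw [if_pos (by omega), if_pos (by omega)]; ring
    rcases eq_or_ne x (-(n:ℤ) - 1) with hx' | hx'
    · subst hx'
      have h1 : tau n (-(n:ℤ) - 1) = -(n:ℤ) := Equiv.swap_apply_right _ _
      rw [h1, chi_eval, chi_eval]
      rcases lt_or_gt_of_ne (fun hh => h (by exact_mod_cast hh) : (e:ℤ) ≠ (n:ℤ)) with hlt | hgt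
      · rw [if_neg (by omega), if_neg (by omega)]; ring
      · rw [if_pos (by omega), if_pos (by omega)]; ring
    · rw [show tau n x = x from Equiv.swap_apply_of_ne_of_ne hx hx']; ring
  rw [this]
  ext f x
  simp [addPerm]

lemma phi_rel_ne_one (n : ℕ) : phi n (rel n) ≠ 1 := by
  rw [phi_rel]
  intro hcon
  have := congrArg (fun (p : Equiv.Perm (ℤ → ZMod 2)) => p 0 (-(n:ℤ))) hcon
  simp only [addPerm, Equiv.coe_addRight, Equiv.Perm.one_apply, Pi.add_apply, Pi.zero_apply,
    zero_add] at this
  rw [phi_rel_apply] at this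
  have h1 : tau n (-(n:ℤ)) = -(n:ℤ) - 1 := Equiv.swap_apply_left _ _
  rw [h1, chi_eval, chi_eval, if_pos (by omega), if_neg (by omega)] at this
  norm_num at this

end HigmanEncoding

open HigmanEncoding in
/-- (Higman-type encoding) In `G_E = PresentedGroup R_E`, the image of
`a^{-m} b a^{m} (c^{-m} d c^{m})⁻¹` is trivial iff `m ∈ E`. -/
theorem higman_encoding_mem_iff (E : Set ℕ) (m : ℕ) :
    (QuotientGroup.mk (rel m) : PresentedGroup (RE E)) = 1 ↔ m ∈ E := by
  rw [QuotientGroup.eq_one_iff]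
  constructor
  · intro h
    by_contra hm
    have hker : Subgroup.normalClosure (RE E) ≤ (phi m).ker := by
      apply Subgroup.normalClosure_le_normal
      rintro x ⟨e, he, rfl⟩
      exact phi_rel_eq_one m e (fun hh => hm (hh ▸ he))
    exact phi_rel_ne_one m (hker h)
  · intro h
    exact Subgroup.subset_normalClosure ⟨m, h, rfl⟩
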